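/- For any trace class operators K_n and K_∞ on a Hilbert space with M := max(‖K_n‖, ‖K_∞‖) < 1, one has |log det(I − K_n) − log det(I − K_∞)| ≤ ‖K_n − K_∞‖_tr / (1 − M). -/

import Mathlib

open MeasureTheory

/-- Telescoping identity for differences of powers in a ring. -/
lemma pow_sub_pow_telescope {R : Type*} [Ring R] (A B : R) :
    ∀ m : ℕ, A ^ (m + 1) - B ^ (m + 1)
      = ∑ j ∈ Finset.range (m + 1), A ^ j * (A - B) * B ^ (m - j) := by
  intro m
  induction m with
  | zero => simp
  | succ m ih =>
    rw [Finset.sum_range_succ']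
    have h1 : ∀ j ∈ Finset.range (m + 1),
        A ^ (j + 1) * (A - B) * B ^ (m + 1 - (j + 1))
          = A * (A ^ j * (A - B) * B ^ (m - j)) := by
      intro j hj
      rw [Nat.succ_sub_succ, pow_succ', mul_assoc, mul_assoc, mul_assoc]
    rw [Finset.sum_congr rfl h1, ← Finset.mul_sum, ← ih]
    simp only [pow_zero, one_mul, Nat.sub_zero]
    rw [mul_sub, sub_mul, ← pow_succ', ← pow_succ']
    abel

/-- For trace class operators `Kn`, `Kinf` on a Hilbert space with
`M := max ‖Kn‖ ‖Kinf‖ < 1`, one has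
`|log det(I − Kn) − log det(I − Kinf)| ≤ ‖Kn − Kinf‖_tr / (1 − M)`, where
`log det (I − K) = −∑_{i ≥ 1} tr (K^i) / i` for `‖K‖ < 1`. -/
theorem stmt_0 {H : Type*} [NormedAddCommGroup H] [InnerProductSpace ℂ H] [CompleteSpace H]
    (tr : (H →L[ℂ] H) → ℂ) (trNorm : (H →L[ℂ] H) → ℝ)
    (htr : ∀ T, ‖tr T‖ ≤ trNorm T)
    (htrNorm_nonneg : ∀ T, 0 ≤ trNorm T)
    (htr_add : ∀ A B, tr (A + B) = tr A + tr B)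
    (hmul_left : ∀ A B, trNorm (A * B) ≤ ‖A‖ * trNorm B)
    (hmul_right : ∀ A B, trNorm (A * B) ≤ trNorm A * ‖B‖)
    (Kn Kinf : H →L[ℂ] H) (M : ℝ)
    (hM : M = max ‖Kn‖ ‖Kinf‖) (hM1 : M < 1)
    (logdetOneSub : (H →L[ℂ] H) → ℂ)
    (hlogdet : ∀ K : H →L[ℂ] H, ‖K‖ < 1 →
      logdetOneSub K = -∑' i : ℕ, tr (K ^ (i + 1)) / ((i : ℂ) + 1))
    (hsummable : ∀ K : H →L[ℂ] H, ‖K‖ < 1 →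
      Summable fun i : ℕ => tr (K ^ (i + 1)) / ((i : ℂ) + 1)) :
    ‖logdetOneSub Kn - logdetOneSub Kinf‖ ≤ trNorm (Kn - Kinf) / (1 - M) := by
  have hKn : ‖Kn‖ ≤ M := hM ▸ le_max_left _ _
  have hKinf : ‖Kinf‖ ≤ M := hM ▸ le_max_right _ _
  have hM0 : 0 ≤ M := le_trans (norm_nonneg _) hKn
  have hKn1 : ‖Kn‖ < 1 := lt_of_le_of_lt hKn hM1
  have hKinf1 : ‖Kinf‖ < 1 := lt_of_le_of_lt hKinf hM1
  set D := trNorm (Kn - Kinf) with hD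
  have hD0 : 0 ≤ D := htrNorm_nonneg _
  -- `tr` is additive
  have htr0 : tr 0 = 0 := by
    have := htr_add 0 0; simpa using this
  have htr_sum : ∀ (s : Finset ℕ) (f : ℕ → (H →L[ℂ] H)),
      tr (∑ j ∈ s, f j) = ∑ j ∈ s, tr (f j) := by
    intro s f
    induction s using Finset.cons_induction with
    | empty => simpa using htr0
    | cons a s ha ih => rw [Finset.sum_cons, htr_add, ih, Finset.sum_cons]
  have htr_sub : ∀ A B : H →L[ℂ] H, tr (A - B) = tr A - tr B := by
    intro A B
    have h : tr (A - B) + tr B = tr A := by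
      rw [← htr_add]; congr 1; abel
    exact eq_sub_of_add_eq h
  -- operator norm of powers
  have hpow : ∀ (A : H →L[ℂ] H), ‖A‖ ≤ M → ∀ j : ℕ, ‖A ^ j‖ ≤ M ^ j := by
    intro A hA j
    induction j with
    | zero =>
      have h1 : ‖(1 : H →L[ℂ] H)‖ ≤ 1 := ContinuousLinearMap.norm_id_le
      simpa using h1
    | succ j ih =>
      rw [pow_succ', pow_succ']
      exact le_trans (norm_mul_le _ _)
        (mul_le_mul hA ih (norm_nonneg _) hM0)
  -- key bound on trace of power differences
  have key : ∀ m : ℕ, ‖tr (Kn ^ (m + 1)) - tr (Kinf ^ (m + 1))‖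
      ≤ (m + 1 : ℝ) * M ^ m * D := by
    intro m
    rw [← htr_sub, pow_sub_pow_telescope, htr_sum]
    calc ‖∑ j ∈ Finset.range (m + 1), tr (Kn ^ j * (Kn - Kinf) * Kinf ^ (m - j))‖
        ≤ ∑ j ∈ Finset.range (m + 1), ‖tr (Kn ^ j * (Kn - Kinf) * Kinf ^ (m - j))‖ :=
          norm_sum_le _ _
      _ ≤ ∑ j ∈ Finset.range (m + 1), M ^ m * D := by
          apply Finset.sum_le_sum
          intro j hj
          have hjm : j ≤ m := Nat.lt_succ_iff.mp (Finset.mem_range.mp hj)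
          calc ‖tr (Kn ^ j * (Kn - Kinf) * Kinf ^ (m - j))‖
              ≤ trNorm (Kn ^ j * (Kn - Kinf) * Kinf ^ (m - j)) := htr _
            _ ≤ ‖Kn ^ j‖ * trNorm ((Kn - Kinf) * Kinf ^ (m - j)) := by
                rw [mul_assoc]; exact hmul_left _ _
            _ ≤ ‖Kn ^ j‖ * (D * ‖Kinf ^ (m - j)‖) :=
                mul_le_mul_of_nonneg_left (hmul_right _ _) (norm_nonneg _)
            _ ≤ M ^ j * (D * M ^ (m - j)) := by
                apply mul_le_mul (hpow Kn hKn j)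
                · exact mul_le_mul_of_nonneg_left (hpow Kinf hKinf _) hD0
                · positivity
                · positivity
            _ = M ^ m * D := by
                rw [show M ^ j * (D * M ^ (m - j)) = M ^ j * M ^ (m - j) * D by ring,
                  ← pow_add, Nat.add_sub_cancel' hjm]
      _ = (m + 1 : ℝ) * M ^ m * D := by
          rw [Finset.sum_const, Finset.card_range]
          ring
  -- put it together
  have s1 := hsummable Kn hKn1
  have s2 := hsummable Kinf hKinf1
  rw [hlogdet Kn hKn1, hlogdet Kinf hKinf1]
  have heq : -∑' i : ℕ, tr (Kn ^ (i + 1)) / ((i : ℂ) + 1)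
      - -∑' i : ℕ, tr (Kinf ^ (i + 1)) / ((i : ℂ) + 1)
      = ∑' i : ℕ, (tr (Kinf ^ (i + 1)) / ((i : ℂ) + 1)
          - tr (Kn ^ (i + 1)) / ((i : ℂ) + 1)) := by
    rw [Summable.tsum_sub s2 s1]; ring
  rw [heq]
  have hgeom : HasSum (fun i : ℕ => M ^ i * D) (D / (1 - M)) := by
    have := (hasSum_geometric_of_lt_one hM0 hM1).mul_right D
    rwa [inv_mul_eq_div] at this
  refine tsum_of_norm_bounded hgeom ?_
  intro i
  rw [div_sub_div_same, norm_div]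
  have hnorm : ‖((i : ℂ) + 1)‖ = (i : ℝ) + 1 := by
    rw [show ((i : ℂ) + 1) = ((i + 1 : ℕ) : ℂ) by push_cast; ring,
      Complex.norm_natCast]
    push_cast; ring
  rw [hnorm, div_le_iff₀ (by positivity)]
  calc ‖tr (Kinf ^ (i + 1)) - tr (Kn ^ (i + 1))‖
      = ‖tr (Kn ^ (i + 1)) - tr (Kinf ^ (i + 1))‖ := norm_sub_rev _ _
    _ ≤ ((i : ℝ) + 1) * M ^ i * D := key i
    _ = M ^ i * D * ((i : ℝ) + 1) := by ring
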